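/- Under the hypotheses of the importance sampling setup (ν ≪ ν̃, Z = E_ν[e^{-W}] finite positive, ν* with dν*/dν = e^{-W}/Z), the relative error satisfies the lower bound r(ν̃) ≥ √(e^{KL(ν* | ν̃)} − 1). -/

import Mathlib

open MeasureTheory ProbabilityTheory Real

theorem relative_error_lower_bound_KL {Ω : Type*} [MeasurableSpace Ω]
    (ν nut : Measure Ω) [IsProbabilityMeasure ν] [IsProbabilityMeasure nut]
    (hac : ν ≪ nut) (W : Ω → ℝ) (hW : Measurable W)
    (Z : ℝ) (hZ : Z = ∫ x, Real.exp (-W x) ∂ν) (hZpos : 0 < Z)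
    (νstar : Measure Ω)
    (hνstar : νstar = ν.withDensity (fun x => ENNReal.ofReal (Real.exp (-W x) / Z)))
    (hacstar : νstar ≪ nut)
    (hInt : Integrable (fun x => (Real.exp (-W x) * (ν.rnDeriv nut x).toReal) ^ 2) nut)
    (hIntlog : Integrable (fun x => Real.log ((νstar.rnDeriv nut x).toReal)) νstar) :
    Real.sqrt (Real.exp (∫ x, Real.log ((νstar.rnDeriv nut x).toReal) ∂νstar) - 1)
      ≤ Real.sqrt (variance (fun x => Real.exp (-W x) * (ν.rnDeriv nut x).toReal) nut) / Z := by
  set f : Ω → ℝ := fun x => Real.exp (-W x) * (ν.rnDeriv nut x).toReal with hf_def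
  set g : Ω → ℝ := fun x => (νstar.rnDeriv nut x).toReal with hg_def
  have hmeasf : Measurable f :=
    (Real.measurable_exp.comp hW.neg).mul (Measure.measurable_rnDeriv ν nut).ennreal_toReal
  -- g = f / Z  a.e. nut
  have hge : g =ᵐ[nut] fun x => f x / Z := by
    have h1 : νstar.rnDeriv nut =ᵐ[nut]
        fun x => ENNReal.ofReal (Real.exp (-W x) / Z) * ν.rnDeriv nut x := by
      rw [hνstar]
      exact Measure.rnDeriv_withDensity_left_of_absolutelyContinuous hac
        ((Real.measurable_exp.comp hW.neg).div_const Z).ennreal_ofReal.aemeasurable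
    filter_upwards [h1] with x hx
    simp only [hg_def, hx, ENNReal.toReal_mul, ENNReal.toReal_ofReal
      (div_nonneg (Real.exp_pos _).le hZpos.le), hf_def]
    ring
  -- integral of f over nut is Z
  have hexpint : Integrable (fun x => Real.exp (-W x)) ν := by
    by_contra h
    rw [integral_undef h] at hZ
    exact hZpos.ne' hZ
  haveI : IsProbabilityMeasure νstar := by
    constructor
    rw [hνstar, withDensity_apply _ MeasurableSet.univ, Measure.restrict_univ,
      ← ofReal_integral_eq_lintegral_ofReal (hexpint.div_const Z)
        (Filter.Eventually.of_forall fun x => div_nonneg (Real.exp_pos _).le hZpos.le)]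
    rw [integral_div, ← hZ, div_self hZpos.ne']
    simp
  have hfZ : ∫ x, f x ∂nut = Z := by
    have h := integral_rnDeriv_smul hac (f := fun x => Real.exp (-W x))
    calc ∫ x, f x ∂nut = ∫ x, (ν.rnDeriv nut x).toReal • Real.exp (-W x) ∂nut := by
          congr 1 with x
          simp [hf_def, smul_eq_mul, mul_comm]
      _ = ∫ x, Real.exp (-W x) ∂ν := h
      _ = Z := hZ.symm
  -- f in L2, variance formula
  have hfL2 : MemLp f 2 nut := by
    rw [memLp_two_iff_integrable_sq hmeasf.aestronglyMeasurable]
    exact hInt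
  have hvar : variance f nut = (∫ x, f x ^ 2 ∂nut) - Z ^ 2 := by
    rw [variance_eq_sub hfL2, hfZ]
    congr 1
  have hvar_nonneg : 0 ≤ variance f nut := variance_nonneg _ _
  -- ∫ g dνstar = ∫ g^2 dnut
  have hg_star : ∫ x, g x ∂νstar = ∫ x, g x ^ 2 ∂nut := by
    rw [← integral_rnDeriv_smul hacstar (f := g)]
    congr 1 with x
    simp [hg_def, smul_eq_mul, sq]
  -- ∫ g^2 dnut = (∫ f^2 dnut) / Z^2
  have hg_sq : ∫ x, g x ^ 2 ∂nut = (∫ x, f x ^ 2 ∂nut) / Z ^ 2 := by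
    have h2 : (fun x => g x ^ 2) =ᵐ[nut] fun x => f x ^ 2 / Z ^ 2 := by
      filter_upwards [hge] with x hx
      rw [hx, div_pow]
    rw [integral_congr_ae h2, integral_div]
  -- integrability of g wrt νstar
  have hg2int : Integrable (fun x => g x ^ 2) nut := by
    have h2 : (fun x => g x ^ 2) =ᵐ[nut] fun x => f x ^ 2 / Z ^ 2 := by
      filter_upwards [hge] with x hx
      rw [hx, div_pow]
    exact ((hInt.div_const (Z ^ 2)).congr h2.symm)
  have hgint_star : Integrable g νstar := by
    rw [← integrable_rnDeriv_smul_iff hacstar]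
    refine hg2int.congr ?_
    filter_upwards with x
    simp [hg_def, smul_eq_mul, sq]
  -- g > 0 a.e. νstar
  have hgpos : ∀ᵐ x ∂νstar, 0 < g x := by
    have h1 : ∀ᵐ x ∂νstar, 0 < νstar.rnDeriv nut x := Measure.rnDeriv_pos hacstar
    have h2 : ∀ᵐ x ∂νstar, νstar.rnDeriv nut x < ⊤ :=
      hacstar.ae_le (Measure.rnDeriv_lt_top νstar nut)
    filter_upwards [h1, h2] with x hx1 hx2
    exact ENNReal.toReal_pos hx1.ne' hx2.ne
  -- Jensen: exp (∫ log g dνstar) ≤ ∫ g dνstar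
  have hjensen : Real.exp (∫ x, Real.log (g x) ∂νstar) ≤ ∫ x, g x ∂νstar := by
    have hcomp : Integrable (fun x => Real.exp (Real.log (g x))) νstar := by
      refine hgint_star.congr ?_
      filter_upwards [hgpos] with x hx
      rw [Real.exp_log hx]
    have := convexOn_exp.map_integral_le (μ := νstar)
      continuous_exp.continuousOn isClosed_univ
      (Filter.Eventually.of_forall fun x => Set.mem_univ _) hIntlog hcomp
    refine this.trans_eq ?_
    refine integral_congr_ae ?_
    filter_upwards [hgpos] with x hx
    exact Real.exp_log hx
  -- combine
  have hkey : Real.exp (∫ x, Real.log (g x) ∂νstar) - 1 ≤ variance f nut / Z ^ 2 := by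
    have h1 : ∫ x, g x ∂νstar = (variance f nut + Z ^ 2) / Z ^ 2 := by
      rw [hg_star, hg_sq, hvar, sub_add_cancel]
    have h2 := hjensen.trans_eq h1
    have hZ2 : (0:ℝ) < Z ^ 2 := by positivity
    rw [add_div, div_self hZ2.ne'] at h2
    linarith
  calc Real.sqrt (Real.exp (∫ x, Real.log (g x) ∂νstar) - 1)
      ≤ Real.sqrt (variance f nut / Z ^ 2) := Real.sqrt_le_sqrt hkey
    _ = Real.sqrt (variance f nut) / Z := by
        rw [Real.sqrt_div hvar_nonneg, Real.sqrt_sq hZpos.le]
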